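/- Let B = (B,+) be an abelian group, C = (C,·) a group, and φ, γ, ψ : C → Aut(B) group homomorphisms (write φ_c, γ_c, ψ_c for the images of c). Define on B × C the operations (b_1,c_1) + (b_2,c_2) = (b_1 + φ_{c_1}(b_2), c_1c_2) and ((φ_{c_1}γ_{c_1})(b_1), c_1) ∘ ((φ_{c_2}γ_{c_2})(b_2), c_2) = ((φ_{c_1c_2}γ_{c_1c_2})(ψ_{c_2}^{-1}(b_1) + b_2), c_1c_2) for all b_1,b_2 ∈ B and c_1,c_2 ∈ C. Then (B × C, +, ∘) is a skew brace if and only if the relations φ_c γ_{c'} = γ_{c'} φ_c and φ_{c'}(γ_{cc'} ψ_{cc'}^{-1} − γ_{c'} ψ_{c'}^{-1}) = γ_c ψ_c^{-1} − id_B hold for all c, c' ∈ C, where products and differences of automorphisms are taken in the endomorphism ring of the abelian group B. -/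

import Mathlib

/-- `(A, add, mul)` with the indicated identities and inverse maps is a skew
(left) brace: both operations are group operations and the skew left
distributivity `a ∘ (b + c) = a ∘ b - a + a ∘ c` holds. -/
def IsSkewBrace {A : Type*} (add : A → A → A) (zero : A) (neg : A → A)
    (mul : A → A → A) (one : A) (inv : A → A) : Prop :=
  (∀ a b c : A, add (add a b) c = add a (add b c)) ∧
  (∀ a : A, add zero a = a) ∧ (∀ a : A, add a zero = a) ∧
  (∀ a : A, add (neg a) a = zero) ∧ (∀ a : A, add a (neg a) = zero) ∧
  (∀ a b c : A, mul (mul a b) c = mul a (mul b c)) ∧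
  (∀ a : A, mul one a = a) ∧ (∀ a : A, mul a one = a) ∧
  (∀ a : A, mul (inv a) a = one) ∧ (∀ a : A, mul a (inv a) = one) ∧
  (∀ a b c : A, mul a (add b c) = add (add (mul a b) (neg a)) (mul a c))

/-- The (multiplicative) group structure on `AddAut A` that Mathlib had at the time
(composition as multiplication); current Mathlib makes `AddAut A` an additive group. -/
instance AddAut.group (A : Type*) [Add A] : Group (AddAut A) where
  mul g h := AddEquiv.trans h g
  one := AddEquiv.refl _
  inv := AddEquiv.symm
  mul_assoc _ _ _ := rfl
  one_mul _ := rfl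
  mul_one _ := rfl
  inv_mul_cancel := AddEquiv.self_trans_symm

variable {B C : Type*} [AddCommGroup B] [Group C]

/-- The addition `(b₁,c₁) + (b₂,c₂) = (b₁ + φ_{c₁}(b₂), c₁c₂)` on `B × C`. -/
def sbAdd (φ : C →* AddAut B) : B × C → B × C → B × C :=
  fun p q => (p.1 + φ p.2 q.1, p.2 * q.2)

/-- The multiplication on `B × C` determined by
`((φ_{c₁}γ_{c₁})(b₁), c₁) ∘ ((φ_{c₂}γ_{c₂})(b₂), c₂)
  = ((φ_{c₁c₂}γ_{c₁c₂})(ψ_{c₂}⁻¹(b₁) + b₂), c₁c₂)`. -/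
def sbMul2 (φ γ ψ : C →* AddAut B) : B × C → B × C → B × C :=
  fun p q =>
    (φ (p.2 * q.2) (γ (p.2 * q.2)
      ((ψ q.2).symm ((γ p.2).symm ((φ p.2).symm p.1)) +
        (γ q.2).symm ((φ q.2).symm q.1))),
     p.2 * q.2)

namespace SBAux

@[simp] lemma aut_mul_apply (g h : AddAut B) (b : B) : (g * h) b = g (h b) := rfl

@[simp] lemma aut_one_apply (b : B) : (1 : AddAut B) b = b := rfl

@[simp] lemma aut_apply_inv_self (g : AddAut B) (b : B) : g (g⁻¹ b) = b :=
  g.apply_symm_apply b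

@[simp] lemma aut_inv_apply_self (g : AddAut B) (b : B) : g⁻¹ (g b) = b :=
  g.symm_apply_apply b

lemma aS (f : C →* AddAut B) (c : C) (b : B) : (f c).symm b = f c⁻¹ b := by
  rw [map_inv]; rfl

lemma aM (f : C →* AddAut B) (x y : C) (b : B) : f (x*y) b = f x (f y b) := by
  rw [map_mul]; rfl

lemma aOne (f : C →* AddAut B) (b : B) : f 1 b = b := by rw [map_one]; rfl

lemma aC1 (f : C →* AddAut B) (x : C) (b : B) : f x⁻¹ (f x b) = b := by
  rw [← aM]; simp [aOne]

lemma aC2 (f : C →* AddAut B) (x : C) (b : B) : f x (f x⁻¹ b) = b := by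
  rw [← aM]; simp [aOne]

variable (φ γ ψ : C →* AddAut B)

/-- The additive inverse for `sbAdd`. -/
def negP : B × C → B × C := fun p => (- φ p.2⁻¹ p.1, p.2⁻¹)

/-- The multiplicative inverse for `sbMul2`. -/
def invP : B × C → B × C :=
  fun p => (φ p.2⁻¹ (γ p.2⁻¹ (- ψ p.2 (γ p.2⁻¹ (φ p.2⁻¹ p.1)))), p.2⁻¹)

lemma add_assoc' : ∀ a b c : B × C,
    sbAdd φ (sbAdd φ a b) c = sbAdd φ a (sbAdd φ b c) := by
  intro a b c
  simp [sbAdd, aM, mul_assoc, add_assoc]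

lemma add_zero_left : ∀ a : B × C, sbAdd φ ((0:B),(1:C)) a = a := by
  intro a; simp [sbAdd, aOne]

lemma add_zero_right : ∀ a : B × C, sbAdd φ a ((0:B),(1:C)) = a := by
  intro a; simp [sbAdd]

lemma add_neg_left : ∀ a : B × C, sbAdd φ (negP φ a) a = ((0:B),(1:C)) := by
  intro a; simp [sbAdd, negP, aC2]

lemma add_neg_right : ∀ a : B × C, sbAdd φ a (negP φ a) = ((0:B),(1:C)) := by
  intro a; simp [sbAdd, negP, aC2]

lemma mul_assoc' : ∀ a b c : B × C,
    sbMul2 φ γ ψ (sbMul2 φ γ ψ a b) c = sbMul2 φ γ ψ a (sbMul2 φ γ ψ b c) := by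
  intro a b c
  simp only [sbMul2, aS]
  simp [aM, mul_assoc, aC1, aC2, map_add, add_assoc, mul_inv_rev]

lemma mul_one_left : ∀ a : B × C, sbMul2 φ γ ψ ((0:B),(1:C)) a = a := by
  intro a; simp only [sbMul2, aS]; simp [aM, aOne, aC1, aC2]

lemma mul_one_right : ∀ a : B × C, sbMul2 φ γ ψ a ((0:B),(1:C)) = a := by
  intro a; simp only [sbMul2, aS]; simp [aM, aOne, aC1, aC2]

lemma mul_inv_left : ∀ a : B × C,
    sbMul2 φ γ ψ (invP φ γ ψ a) a = ((0:B),(1:C)) := by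
  intro a; simp only [sbMul2, invP, aS]; simp [aM, aOne, aC1, aC2]

lemma mul_inv_right : ∀ a : B × C,
    sbMul2 φ γ ψ a (invP φ γ ψ a) = ((0:B),(1:C)) := by
  intro a; simp only [sbMul2, invP, aS]; simp [aM, aOne, aC1, aC2, mul_inv_rev]

lemma distrib (h1 : ∀ c c' b, φ c (γ c' b) = γ c' (φ c b))
    (h2 : ∀ c c' b, φ c' (γ (c*c') ((ψ (c*c')).symm b) - γ c' ((ψ c').symm b))
      = γ c ((ψ c).symm b) - b) :
    ∀ a b c : B × C, sbMul2 φ γ ψ a (sbAdd φ b c)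
      = sbAdd φ (sbAdd φ (sbMul2 φ γ ψ a b) (negP φ a)) (sbMul2 φ γ ψ a c) := by
  intro ⟨a₁, c⟩ ⟨b₁, c₁⟩ ⟨b₂, c₂⟩
  obtain ⟨u, rfl⟩ : ∃ u, a₁ = φ c (γ c u) := ⟨γ c⁻¹ (φ c⁻¹ a₁), by simp [aC2]⟩
  have h2' : ∀ c c' b, φ c' (γ c (γ c' (ψ c'⁻¹ (ψ c⁻¹ b))))
      = γ c (ψ c⁻¹ b) - b + φ c' (γ c' (ψ c'⁻¹ b)) := by
    intro c c' b
    have := h2 c c' b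
    simp only [aS, aM, mul_inv_rev, map_sub] at this
    rw [sub_eq_sub_iff_add_eq_add] at this
    rw [sub_add_eq_add_sub, eq_sub_iff_add_eq]; exact this
  simp only [sbMul2, sbAdd, negP, aS]
  simp only [aM, map_add, map_neg, mul_inv_rev, aC1, aC2, aOne, Prod.mk.injEq]
  constructor
  · have k := h2' c₁ c₂ u
    apply_fun (fun x => φ c (φ c₁ (γ c x))) at k
    simp only [map_sub, map_add, sub_eq_add_neg, map_neg] at k
    simp only [h1, aC1, aC2] at k ⊢
    rw [k]
    abel
  · group

end SBAux

/-- **Theorem 3.3 (second construction)**: `(B × C, +, ∘)` is a skew brace if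
and only if `φ_c γ_{c'} = γ_{c'} φ_c` and
`φ_{c'}(γ_{cc'} ψ_{cc'}⁻¹ - γ_{c'} ψ_{c'}⁻¹) = γ_c ψ_c⁻¹ - id` for all
`c, c' ∈ C`. -/
theorem second_construction_isSkewBrace_iff (φ γ ψ : C →* AddAut B) :
    (∃ (zero : B × C) (neg : B × C → B × C) (one : B × C)
        (inv : B × C → B × C),
      IsSkewBrace (sbAdd φ) zero neg (sbMul2 φ γ ψ) one inv) ↔
    ((∀ (c c' : C) (b : B), φ c (γ c' b) = γ c' (φ c b)) ∧
      (∀ (c c' : C) (b : B),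
        φ c' (γ (c * c') ((ψ (c * c')).symm b) - γ c' ((ψ c').symm b)) =
          γ c ((ψ c).symm b) - b)) := by
  open SBAux in
  constructor
  · rintro ⟨zero, neg, one, inv, ha, hz, hz', hn, hn', hm, ho, ho', hi, hi', hd⟩
    have hz0 : zero = ((0:B),(1:C)) := (add_zero_right φ zero).symm.trans (hz _)
    have hneg : ∀ a, neg a = negP φ a := by
      intro a
      calc neg a = sbAdd φ (neg a) ((0:B),(1:C)) := (add_zero_right φ _).symm
        _ = sbAdd φ (neg a) (sbAdd φ a (negP φ a)) := by rw [add_neg_right]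
        _ = sbAdd φ (sbAdd φ (neg a) a) (negP φ a) := (ha _ _ _).symm
        _ = sbAdd φ zero (negP φ a) := by rw [hn]
        _ = negP φ a := by rw [hz0]; exact add_zero_left φ _
    have hd' : ∀ a b c : B × C, sbMul2 φ γ ψ a (sbAdd φ b c)
        = sbAdd φ (sbAdd φ (sbMul2 φ γ ψ a b) (negP φ a)) (sbMul2 φ γ ψ a c) := by
      intro a b c; rw [← hneg]; exact hd a b c
    constructor
    · intro c c' b
      have e := congrArg Prod.fst (hd' ((0:B), c') (φ c b, (1:C)) ((0:B), c))
      simp only [sbMul2, sbAdd, negP, aS] at e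
      simp only [aM, aOne, aC1, aC2, map_zero, add_zero, zero_add, neg_zero,
        mul_one, one_mul, mul_inv_rev, inv_one, map_add, map_neg] at e
      exact (φ c').injective e
    · intro c c' b
      have e := congrArg Prod.fst (hd' (b, (1:C)) ((0:B), c) ((0:B), c'))
      simp only [sbMul2, sbAdd, negP, aS] at e
      simp only [aM, aOne, aC1, aC2, map_zero, add_zero, zero_add, neg_zero,
        mul_one, one_mul, mul_inv_rev, inv_one, map_add, map_neg] at e
      apply (φ c).injective
      simp only [aS, aM, mul_inv_rev, map_sub]
      rw [e]
      abel
  · rintro ⟨h1, h2⟩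
    exact ⟨((0:B),(1:C)), negP φ, ((0:B),(1:C)), invP φ γ ψ,
      add_assoc' φ, add_zero_left φ, add_zero_right φ, add_neg_left φ,
      add_neg_right φ, mul_assoc' φ γ ψ, mul_one_left φ γ ψ,
      mul_one_right φ γ ψ, mul_inv_left φ γ ψ, mul_inv_right φ γ ψ,
      distrib φ γ ψ h1 h2⟩
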